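/- Let n : ℕ, let f : EuclideanSpace ℝ (Fin n) → ℝ be differentiable with L-Lipschitz gradient (L ≥ 0), let S be a finite set of coordinates, and let (Ω, μ) be a probability space. Let g : Ω → EuclideanSpace ℝ (Fin n) with ω ↦ (g ω)∣S integrable, ω ↦ ‖(g ω)∣S‖^2 integrable, and ω ↦ f (x - (α*γ) • (g ω)∣S) integrable. Let d := ∫ (g ω)∣S ∂μ and assume ∫ ‖(g ω)∣S - d‖^2 ∂μ ≤ σ^2, the alignment condition ⟪(gradient f x)∣S, d⟫ ≥ α * ‖d‖^2 with 0 < α ≤ 1, and 0 < γ with γ * L ≤ 1. Then (1/2) * α^2 * ‖d‖^2 ≤ (f x - ∫ f (x - (α*γ) • (g ω)∣S) ∂μ) / γ + (γ * L / 2) * σ^2. -/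

import Mathlib

open MeasureTheory

/-- The masked vector `x∣S`: keeps coordinates in `S`, zeroes out the rest. -/
def mask {n : ℕ} (S : Finset (Fin n)) (x : EuclideanSpace ℝ (Fin n)) :
    EuclideanSpace ℝ (Fin n) :=
  WithLp.toLp 2 (fun i => if i ∈ S then x i else 0)



/-- Descent lemma for functions with Lipschitz gradient. -/
lemma descent_lemma {F : Type*} [NormedAddCommGroup F] [InnerProductSpace ℝ F] [CompleteSpace F]
    (f : F → ℝ) (L : ℝ) (hL : 0 ≤ L) (hdiff : Differentiable ℝ f)
    (hlip : ∀ x y, ‖gradient f x - gradient f y‖ ≤ L * ‖x - y‖)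
    (x v : F) :
    f (x + v) ≤ f x + (inner ℝ (gradient f x) v : ℝ) + L / 2 * ‖v‖ ^ 2 := by
  set c : ℝ := (inner ℝ (gradient f x) v : ℝ) with hc
  set φ : ℝ → ℝ := fun t => f (x + t • v) - t * c - L / 2 * ‖v‖ ^ 2 * t ^ 2 with hφ
  have hline : ∀ t : ℝ, HasDerivAt (fun t : ℝ => x + t • v) v t := by
    intro t
    simpa using ((hasDerivAt_id t).smul_const v).const_add x
  have hfd : ∀ t : ℝ, HasDerivAt (fun t => f (x + t • v))
      ((inner ℝ (gradient f (x + t • v)) v : ℝ)) t := by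
    intro t
    have h1 := (hdiff (x + t • v)).hasFDerivAt.comp_hasDerivAt t (hline t)
    have h2 : (fderiv ℝ f (x + t • v)) v = (inner ℝ (gradient f (x + t • v)) v : ℝ) := by
      rw [gradient]
      exact (InnerProductSpace.toDual_symm_apply).symm
    rw [h2] at h1
    exact h1
  have hφd : ∀ t : ℝ, HasDerivAt φ
      ((inner ℝ (gradient f (x + t • v)) v : ℝ) - c - L / 2 * ‖v‖ ^ 2 * (2 * t)) t := by
    intro t
    have h3 : HasDerivAt (fun t : ℝ => t * c) c t := by
      simpa using (hasDerivAt_id t).mul_const c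
    have h4 : HasDerivAt (fun t : ℝ => L / 2 * ‖v‖ ^ 2 * t ^ 2)
        (L / 2 * ‖v‖ ^ 2 * (2 * t)) t := by
      simpa using (hasDerivAt_pow 2 t).const_mul (L / 2 * ‖v‖ ^ 2)
    exact ((hfd t).sub h3).sub h4
  have hanti : AntitoneOn φ (Set.Icc 0 1) := by
    apply antitoneOn_of_deriv_nonpos (convex_Icc 0 1)
    · exact fun t _ => ((hφd t).continuousAt).continuousWithinAt
    · exact fun t _ => (hφd t).differentiableAt.differentiableWithinAt
    · intro t ht
      rw [interior_Icc] at ht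
      rw [(hφd t).deriv]
      have h5 : (inner ℝ (gradient f (x + t • v)) v : ℝ) - c
          = (inner ℝ (gradient f (x + t • v) - gradient f x) v : ℝ) := by
        rw [inner_sub_left]
      have h6 : (inner ℝ (gradient f (x + t • v) - gradient f x) v : ℝ)
          ≤ L * t * ‖v‖ ^ 2 := by
        calc (inner ℝ (gradient f (x + t • v) - gradient f x) v : ℝ)
            ≤ ‖gradient f (x + t • v) - gradient f x‖ * ‖v‖ :=
              real_inner_le_norm _ _
          _ ≤ (L * ‖(x + t • v) - x‖) * ‖v‖ := by
              gcongr; exact hlip _ _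
          _ = L * t * ‖v‖ ^ 2 := by
              rw [add_sub_cancel_left, norm_smul, Real.norm_eq_abs,
                abs_of_pos ht.1]
              ring
      nlinarith [h6, h5]
  have key := hanti (Set.mem_Icc.2 ⟨le_refl 0, zero_le_one⟩)
    (Set.mem_Icc.2 ⟨zero_le_one, le_refl 1⟩) zero_le_one
  simp only [hφ, zero_smul, add_zero, one_smul, zero_mul, sub_zero, zero_pow,
    mul_zero, one_mul, one_pow, mul_one] at key
  linarith

lemma inner_mask {n : ℕ} (S : Finset (Fin n)) (a b : EuclideanSpace ℝ (Fin n)) :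
    (inner ℝ a (mask S b) : ℝ) = (inner ℝ (mask S a) (mask S b) : ℝ) := by
  simp only [PiLp.inner_apply, RCLike.inner_apply, conj_trivial, mask, PiLp.toLp_apply]
  apply Finset.sum_congr rfl
  intro i _
  by_cases h : i ∈ S <;> simp [h]

set_option maxHeartbeats 1000000 in
/-- Rearranged one-step inequality used at the start of the proof of
Theorem 1 of ProgFed, stated for a single step before telescoping. -/
theorem progfed_rearranged_step (n : ℕ) (f : EuclideanSpace ℝ (Fin n) → ℝ)
    (L : ℝ) (hL : 0 ≤ L) (hdiff : Differentiable ℝ f)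
    (hlip : ∀ x y, ‖gradient f x - gradient f y‖ ≤ L * ‖x - y‖)
    (S : Finset (Fin n)) (Ω : Type*) [MeasurableSpace Ω]
    (μ : Measure Ω) [IsProbabilityMeasure μ]
    (g : Ω → EuclideanSpace ℝ (Fin n))
    (x : EuclideanSpace ℝ (Fin n)) (α γ σ : ℝ)
    (hg₁ : Integrable (fun ω => mask S (g ω)) μ)
    (hg₂ : Integrable (fun ω => ‖mask S (g ω)‖ ^ 2) μ)
    (hg₃ : Integrable (fun ω => f (x - (α * γ) • mask S (g ω))) μ)
    (d : EuclideanSpace ℝ (Fin n)) (hd : d = ∫ ω, mask S (g ω) ∂μ)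
    (hvar : ∫ ω, ‖mask S (g ω) - d‖ ^ 2 ∂μ ≤ σ ^ 2)
    (halign : (inner ℝ (mask S (gradient f x)) d : ℝ) ≥ α * ‖d‖ ^ 2)
    (hα₀ : 0 < α) (hα₁ : α ≤ 1) (hγ : 0 < γ) (hγL : γ * L ≤ 1) :
    (1 / 2) * α ^ 2 * ‖d‖ ^ 2 ≤
      (f x - ∫ ω, f (x - (α * γ) • mask S (g ω)) ∂μ) / γ +
        (γ * L / 2) * σ ^ 2 := by
  set η : ℝ := α * γ with hη
  have hη0 : 0 ≤ η := le_of_lt (mul_pos hα₀ hγ)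
  -- pointwise descent bound
  have hpt : ∀ ω, f (x - η • mask S (g ω)) ≤
      f x - η * (inner ℝ (gradient f x) (mask S (g ω)) : ℝ) + L / 2 * η ^ 2 * ‖mask S (g ω)‖ ^ 2 := by
    intro ω
    have h := descent_lemma f L hL hdiff hlip x (-(η • mask S (g ω)))
    have e1 : x + -(η • mask S (g ω)) = x - η • mask S (g ω) := (sub_eq_add_neg x _).symm
    have e2 : (inner ℝ (gradient f x) (-(η • mask S (g ω))) : ℝ)
        = -(η * (inner ℝ (gradient f x) (mask S (g ω)) : ℝ)) := by
      rw [inner_neg_right, real_inner_smul_right]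
    have e3 : ‖-(η • mask S (g ω))‖ ^ 2 = η ^ 2 * ‖mask S (g ω)‖ ^ 2 := by
      rw [norm_neg, norm_smul, mul_pow, Real.norm_eq_abs, sq_abs]
    rw [e1, e2, e3] at h
    linarith
  -- integrability
  have hI1 : Integrable (fun ω => (inner ℝ (gradient f x) (mask S (g ω)) : ℝ)) μ :=
    hg₁.const_inner _
  have hI2 : Integrable (fun ω =>
      f x - η * (inner ℝ (gradient f x) (mask S (g ω)) : ℝ)) μ :=
    (integrable_const _).sub (hI1.const_mul η)
  have hI3 : Integrable (fun ω => L / 2 * η ^ 2 * ‖mask S (g ω)‖ ^ 2) μ :=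
    hg₂.const_mul _
  have hRHS : Integrable (fun ω =>
      f x - η * (inner ℝ (gradient f x) (mask S (g ω)) : ℝ) + L / 2 * η ^ 2 * ‖mask S (g ω)‖ ^ 2) μ :=
    hI2.add hI3
  -- integrate the pointwise bound
  have hA : (∫ ω, f (x - η • mask S (g ω)) ∂μ) ≤
      f x - η * (inner ℝ (gradient f x) d : ℝ) + L / 2 * η ^ 2 * ∫ ω, ‖mask S (g ω)‖ ^ 2 ∂μ := by
    calc (∫ ω, f (x - η • mask S (g ω)) ∂μ)
        ≤ ∫ ω, (f x - η * (inner ℝ (gradient f x) (mask S (g ω)) : ℝ)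
            + L / 2 * η ^ 2 * ‖mask S (g ω)‖ ^ 2) ∂μ := integral_mono hg₃ hRHS hpt
      _ = f x - η * (inner ℝ (gradient f x) d : ℝ)
            + L / 2 * η ^ 2 * ∫ ω, ‖mask S (g ω)‖ ^ 2 ∂μ := by
          rw [integral_add hI2 hI3, integral_sub (integrable_const _) (hI1.const_mul η),
            integral_const, integral_const_mul, integral_const_mul,
            integral_inner hg₁, ← hd]
          simp
  -- alignment
  have hGd : (inner ℝ (gradient f x) d : ℝ) = (inner ℝ (mask S (gradient f x)) d : ℝ) := by
    rw [hd, ← integral_inner hg₁, ← integral_inner hg₁]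
    exact integral_congr_ae (Filter.Eventually.of_forall fun ω => inner_mask S _ _)
  -- variance decomposition
  have hud : Integrable (fun ω => mask S (g ω) - d) μ := hg₁.sub (integrable_const d)
  have hI4 : Integrable (fun ω => 2 * (inner ℝ (mask S (g ω) - d) d : ℝ)) μ :=
    (hud.inner_const d).const_mul 2
  have expand : ∀ ω, ‖mask S (g ω)‖ ^ 2
      = ‖mask S (g ω) - d‖ ^ 2 + 2 * (inner ℝ (mask S (g ω) - d) d : ℝ) + ‖d‖ ^ 2 := by
    intro ω
    have h := norm_add_sq_real (mask S (g ω) - d) d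
    rwa [sub_add_cancel] at h
  have hIdev : Integrable (fun ω => ‖mask S (g ω) - d‖ ^ 2) μ := by
    have heq : (fun ω => ‖mask S (g ω) - d‖ ^ 2)
        = fun ω => ‖mask S (g ω)‖ ^ 2 - 2 * (inner ℝ (mask S (g ω) - d) d : ℝ) - ‖d‖ ^ 2 :=
      funext fun ω => by have := expand ω; linarith
    rw [heq]
    have h1 : Integrable (fun ω => ‖mask S (g ω)‖ ^ 2
        - 2 * (inner ℝ (mask S (g ω) - d) d : ℝ)) μ := hg₂.sub hI4
    exact h1.sub (integrable_const _)
  have hzero : (∫ ω, (inner ℝ (mask S (g ω) - d) d : ℝ) ∂μ) = 0 := by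
    have : (fun ω => (inner ℝ (mask S (g ω) - d) d : ℝ)) = fun ω => (inner ℝ d (mask S (g ω) - d) : ℝ) :=
      funext fun ω => real_inner_comm _ _
    rw [this, integral_inner hud, integral_sub hg₁ (integrable_const d),
      integral_const, ← hd]
    simp
  have hIu : (∫ ω, ‖mask S (g ω)‖ ^ 2 ∂μ)
      = (∫ ω, ‖mask S (g ω) - d‖ ^ 2 ∂μ) + ‖d‖ ^ 2 := by
    calc (∫ ω, ‖mask S (g ω)‖ ^ 2 ∂μ)
        = ∫ ω, (‖mask S (g ω) - d‖ ^ 2 + 2 * (inner ℝ (mask S (g ω) - d) d : ℝ) + ‖d‖ ^ 2) ∂μ :=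
          integral_congr_ae (Filter.Eventually.of_forall expand)
      _ = (∫ ω, ‖mask S (g ω) - d‖ ^ 2 ∂μ) + ‖d‖ ^ 2 := by
          have h2 : Integrable (fun ω => ‖mask S (g ω) - d‖ ^ 2
              + 2 * (inner ℝ (mask S (g ω) - d) d : ℝ)) μ := hIdev.add hI4
          rw [integral_add h2 (integrable_const _), integral_add hIdev hI4,
            integral_const_mul, hzero, integral_const]
          simp
  have hσ0 : 0 ≤ σ ^ 2 :=
    le_trans (integral_nonneg fun ω => sq_nonneg _) hvar
  have hIle : (∫ ω, ‖mask S (g ω)‖ ^ 2 ∂μ) ≤ σ ^ 2 + ‖d‖ ^ 2 := by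
    rw [hIu]; linarith
  -- put it together
  set A : ℝ := ∫ ω, f (x - η • mask S (g ω)) ∂μ with hAdef
  have h7 : η * (inner ℝ (gradient f x) d : ℝ)
      - L / 2 * η ^ 2 * ∫ ω, ‖mask S (g ω)‖ ^ 2 ∂μ ≤ f x - A := by linarith
  have h8 : η * (α * ‖d‖ ^ 2) ≤ η * (inner ℝ (gradient f x) d : ℝ) := by
    rw [hGd]; exact mul_le_mul_of_nonneg_left halign hη0
  have h9 : L / 2 * η ^ 2 * (∫ ω, ‖mask S (g ω)‖ ^ 2 ∂μ)
      ≤ L / 2 * η ^ 2 * (σ ^ 2 + ‖d‖ ^ 2) :=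
    mul_le_mul_of_nonneg_left hIle (by positivity)
  have h10 : 0 ≤ α ^ 2 * γ * ‖d‖ ^ 2 * (1 - γ * L) := by
    apply mul_nonneg (by positivity) (by linarith)
  have h11 : 0 ≤ γ ^ 2 * L * σ ^ 2 * (1 - α ^ 2) := by
    have hα2 : α ^ 2 ≤ 1 := by nlinarith
    apply mul_nonneg (by positivity) (by linarith)
  have hrw : (f x - A) / γ + γ * L / 2 * σ ^ 2
      = ((f x - A) + γ * (γ * L / 2 * σ ^ 2)) / γ := by
    field_simp
  rw [hrw, le_div_iff₀ hγ]
  rw [hη] at h7 h8 h9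
  nlinarith [h7, h8, h9, h10, h11]
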